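/- arXiv:2508.09336 — 2 statements merged into one kernel-verified Lean document; each statement's English description precedes it below -/
import Mathlib

section
/- Let G_1,…,G_k be finite simple connected graphs on pairwise disjoint vertex sets, each with at least two vertices, and let ℓ be the number of indices i for which G_i forces a 𝟙 representation. Pick v_i ∈ V(G_i) for each i, let T be a tree on vertex set {v_1,…,v_k}, and let G be the graph with vertex set ∪_i V(G_i) and edge set E(T) ∪ ∪_i E(G_i). Then cdim(G) = max{ℓ−1, 0} + Σ_{i=1}^{k} cdim(G_i). -/
open SimpleGraph

namespace ConnDim

open Classical in
/-- The local connectivity `κ(a,b)`: the maximum number of internally vertex-disjoint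
`a`-`b` paths, with `κ(a,a) = ∞`. -/
noncomputable def localConn {V : Type*} (G : SimpleGraph V) (a b : V) : ℕ∞ :=
  if a = b then ⊤
  else sSup {n : ℕ∞ | ∃ Ps : Finset (G.Path a b),
    (∀ p ∈ Ps, ∀ q ∈ Ps, p ≠ q → ∀ x : V,
        x ∈ p.1.support → x ∈ q.1.support → x = a ∨ x = b) ∧
    (Ps.card : ℕ∞) = n}

/-- A set `W` is connectivity resolving if vertices are determined by their
local connectivities to the elements of `W`. -/
def ConnResolving {V : Type*} (G : SimpleGraph V) (W : Set V) : Prop :=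
  ∀ u v : V, (∀ w ∈ W, localConn G u w = localConn G v w) → u = v

/-- The connectivity dimension: minimum cardinality of a connectivity resolving set. -/
noncomputable def cdim {V : Type*} (G : SimpleGraph V) : ℕ :=
  sInf {n : ℕ | ∃ W : Set V, ConnResolving G W ∧ W.ncard = n}

/-- A set `W` is metric resolving if vertices are determined by their distances
to the elements of `W`. -/
def MetricResolving {V : Type*} (G : SimpleGraph V) (W : Set V) : Prop :=
  ∀ u v : V, (∀ w ∈ W, G.dist u w = G.dist v w) → u = v

/-- The metric dimension: minimum cardinality of a metric resolving set. -/
noncomputable def mdim {V : Type*} (G : SimpleGraph V) : ℕ :=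
  sInf {n : ℕ | ∃ W : Set V, MetricResolving G W ∧ W.ncard = n}

/-- `G` forces a `𝟙` representation if every minimum resolving set (basis) `B` admits a
vertex whose local connectivity to every element of `B` equals `1`. -/
def ForcesOne {V : Type*} (G : SimpleGraph V) : Prop :=
  ∀ B : Set V, ConnResolving G B → B.ncard = cdim G →
    ∃ v : V, ∀ b ∈ B, localConn G v b = 1

/-- A cut vertex of a connected graph: its removal disconnects the graph. -/
def IsCutVertex {V : Type*} (G : SimpleGraph V) (v : V) : Prop :=
  G.Connected ∧ ¬ (G.induce {u : V | u ≠ v}).Connected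

/-- A block of `G`: a maximal connected subgraph of `G` without a cut vertex of itself. -/
def IsBlock {V : Type*} (G : SimpleGraph V) (H : G.Subgraph) : Prop :=
  H.coe.Connected ∧ (∀ v, ¬ IsCutVertex H.coe v) ∧
  ∀ H' : G.Subgraph, H ≤ H' → H'.coe.Connected → (∀ v, ¬ IsCutVertex H'.coe v) → H' = H

/-- The number of blocks of `G`. -/
noncomputable def numBlocks {V : Type*} (G : SimpleGraph V) : ℕ :=
  Nat.card {H : G.Subgraph // IsBlock G H}

/-- Two vertices are twins if they have the same neighborhood in the graph with
both of them deleted. -/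
def AreTwins {V : Type*} (G : SimpleGraph V) (a b : V) : Prop :=
  ∀ x : V, x ≠ a → x ≠ b → (G.Adj a x ↔ G.Adj b x)

/-- The threshold graph generated by a binary sequence `L` (`false` = isolated vertex,
`true` = dominating vertex): two vertices are adjacent iff the later one was added
as a dominating vertex. -/
def thresholdGraph (L : List Bool) : SimpleGraph (Fin L.length) :=
  SimpleGraph.fromRel (fun i j => i < j ∧ L.get j = true)

/-- The alternating binary sequence `0,1,0,1,…,0,1` of length `2 * n`. -/
def altList (n : ℕ) : List Bool := (List.replicate n [false, true]).flatten

/-- The join of two graphs on disjoint vertex sets by the bridge `v₁v₂`. -/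
def bridgeJoin {V₁ V₂ : Type*} (G₁ : SimpleGraph V₁) (G₂ : SimpleGraph V₂)
    (v₁ : V₁) (v₂ : V₂) : SimpleGraph (V₁ ⊕ V₂) :=
  G₁.map Function.Embedding.inl ⊔ G₂.map Function.Embedding.inr
    ⊔ SimpleGraph.fromEdgeSet {s(Sum.inl v₁, Sum.inr v₂)}

/-- The graph obtained from `G` by attaching a new leaf (the vertex `none`) to `u`. -/
def attachLeaf {V : Type*} (G : SimpleGraph V) (u : V) : SimpleGraph (Option V) :=
  G.map Function.Embedding.some ⊔ SimpleGraph.fromEdgeSet {s(some u, (none : Option V))}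

/-- The chain of `t` triangles (triangle `i` has vertices `inl i.castSucc`, `inl i.succ`,
`inr (inl i)`), with a leaf `inr (inr ())` attached to the end vertex `inl 0`. -/
def triChain (t : ℕ) : SimpleGraph (Fin (t+1) ⊕ Fin t ⊕ Unit) :=
  SimpleGraph.fromRel (fun a b =>
    match a, b with
    | Sum.inl i, Sum.inl j => (i : ℕ) + 1 = (j : ℕ)
    | Sum.inr (Sum.inl i), Sum.inl j => j = Fin.castSucc i ∨ j = Fin.succ i
    | Sum.inr (Sum.inr _), Sum.inl j => j = 0
    | _, _ => False)

/-! ### Auxiliary material for the proof of `stmt13` -/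

section GenericAux
variable {α : Type*} {G : SimpleGraph α}

open Classical in
lemma localConn_def' {a b : α} (h : a ≠ b) :
    localConn G a b = sSup {n : ℕ∞ | ∃ Ps : Finset (G.Path a b),
      (∀ p ∈ Ps, ∀ q ∈ Ps, p ≠ q → ∀ x : α,
          x ∈ p.1.support → x ∈ q.1.support → x = a ∨ x = b) ∧
      (Ps.card : ℕ∞) = n} := by
  rw [localConn, if_neg h]

lemma localConn_self' (a : α) : localConn G a a = ⊤ := by
  rw [localConn, if_pos rfl]

lemma localConn_ne_top [Fintype α] {a b : α} (h : a ≠ b) : localConn G a b ≠ ⊤ := by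
  classical
  rw [localConn_def' h]
  have hb : ∀ n ∈ {n : ℕ∞ | ∃ Ps : Finset (G.Path a b),
      (∀ p ∈ Ps, ∀ q ∈ Ps, p ≠ q → ∀ x : α,
          x ∈ p.1.support → x ∈ q.1.support → x = a ∨ x = b) ∧
      (Ps.card : ℕ∞) = n}, n ≤ (Fintype.card (G.Path a b) : ℕ∞) := by
    rintro n ⟨Ps, -, rfl⟩
    exact_mod_cast Nat.cast_le.2 (Finset.card_le_univ Ps)
  intro htop
  have := sSup_le hb
  rw [htop] at this
  exact (ENat.coe_ne_top _) (top_le_iff.mp this)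

lemma localConn_eq_top_iff [Fintype α] {a b : α} : localConn G a b = ⊤ ↔ a = b :=
  ⟨fun h => by by_contra hne; exact localConn_ne_top hne h, fun h => h ▸ localConn_self' a⟩

lemma one_le_localConn {a b : α} (h : G.Reachable a b) : 1 ≤ localConn G a b := by
  classical
  rcases eq_or_ne a b with rfl | hne
  · rw [localConn_self']; exact le_top
  · rw [localConn_def' hne]
    refine le_sSup ?_
    obtain ⟨w⟩ := h
    refine ⟨{w.toPath}, ?_, by simp⟩
    intro p hp q hq hpq
    simp only [Finset.mem_singleton] at hp hq
    exact absurd (hp.trans hq.symm) hpq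

lemma localConn_eq_one {a b : α} (hne : a ≠ b) (hr : G.Reachable a b)
    (hcut : ∀ p q : G.Path a b, p ≠ q →
      ∃ x, x ∈ p.1.support ∧ x ∈ q.1.support ∧ x ≠ a ∧ x ≠ b) :
    localConn G a b = 1 := by
  classical
  refine le_antisymm ?_ (one_le_localConn hr)
  rw [localConn_def' hne]
  refine sSup_le ?_
  rintro n ⟨Ps, hdisj, rfl⟩
  norm_cast
  by_contra hgt
  push_neg at hgt
  obtain ⟨p, hp, q, hq, hpq⟩ := Finset.one_lt_card.1 hgt
  obtain ⟨x, hxp, hxq, hxa, hxb⟩ := hcut p q hpq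
  rcases hdisj p hp q hq hpq x hxp hxq with h | h
  · exact hxa h
  · exact hxb h

lemma connResolving_univ [Fintype α] : ConnResolving G Set.univ := by
  intro u w h
  have := h w (Set.mem_univ w)
  rw [localConn_self'] at this
  exact localConn_eq_top_iff.1 this

lemma cdim_spec (G : SimpleGraph α) [Fintype α] :
    ∃ W : Set α, ConnResolving G W ∧ W.ncard = cdim G := by
  have hne : {n : ℕ | ∃ W : Set α, ConnResolving G W ∧ W.ncard = n}.Nonempty :=
    ⟨_, Set.univ, connResolving_univ, rfl⟩
  exact Nat.sInf_mem hne

lemma ConnResolving.mono {W W' : Set α} (h : W ⊆ W') (hW : ConnResolving G W) :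
    ConnResolving G W' := fun u w hall => hW u w fun x hx => hall x (h hx)

lemma cdim_le_ncard {W : Set α} (hW : ConnResolving G W) : cdim G ≤ W.ncard :=
  Nat.sInf_le ⟨W, hW, rfl⟩

/-- `W` admits a vertex all of whose local connectivities to `W` equal `1`. -/
def AllOne (G : SimpleGraph α) (W : Set α) : Prop :=
  ∃ u, ∀ w ∈ W, localConn G u w = 1

lemma exists_resolving_no_allone (G : SimpleGraph α) [Fintype α] (hF : ForcesOne G) :
    ∃ W : Set α, ConnResolving G W ∧ W.ncard = cdim G + 1 ∧ ¬ AllOne G W := by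
  obtain ⟨B, hB, hcard⟩ := cdim_spec G
  obtain ⟨x, hx⟩ := hF B hB hcard
  have hxB : x ∉ B := by
    intro hxB
    have := hx x hxB
    rw [localConn_self'] at this
    simp at this
  refine ⟨insert x B, hB.mono (Set.subset_insert _ _), ?_, ?_⟩
  · rw [Set.ncard_insert_of_notMem hxB (Set.toFinite B), hcard]
  · rintro ⟨u, hu⟩
    have hux : u = x := by
      refine hB u x fun w hw => ?_
      rw [hu w (Set.mem_insert_of_mem _ hw), hx w hw]
    have := hu x (Set.mem_insert _ _)
    rw [hux, localConn_self'] at this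
    simp at this

lemma of_not_forcesOne (G : SimpleGraph α) (h : ¬ ForcesOne G) :
    ∃ W : Set α, ConnResolving G W ∧ W.ncard = cdim G ∧ ¬ AllOne G W := by
  rw [ForcesOne] at h
  push_neg at h
  obtain ⟨B, h1, h2, h3⟩ := h
  refine ⟨B, h1, h2, ?_⟩
  rintro ⟨u, hu⟩
  obtain ⟨b, hb, hbne⟩ := h3 u
  exact hbne (hu b hb)

lemma localConn_map {β : Type*} {H : SimpleGraph β}
    (f : G →g H) (hinj : Function.Injective f) (u w : α)
    (hsurj : Function.Surjective (fun p : G.Path u w => p.map f hinj)) :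
    localConn H (f u) (f w) = localConn G u w := by
  classical
  rcases eq_or_ne u w with rfl | hne
  · rw [localConn_self', localConn_self']
  · have hne' : f u ≠ f w := fun h => hne (hinj h)
    rw [localConn_def' hne, localConn_def' hne']
    let e : G.Path u w ≃ H.Path (f u) (f w) :=
      Equiv.ofBijective _ ⟨Path.map_injective hinj u w, hsurj⟩
    have he : ∀ p : G.Path u w, (e p).1 = p.1.map f := fun p => rfl
    congr 1
    ext n
    constructor
    · rintro ⟨Qs, hdisj, rfl⟩
      refine ⟨Qs.map e.symm.toEmbedding, ?_, by simp⟩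
      intro p hp q hq hpq x hxp hxq
      simp only [Finset.mem_map, Equiv.coe_toEmbedding] at hp hq
      obtain ⟨p', hp', rfl⟩ := hp
      obtain ⟨q', hq', rfl⟩ := hq
      have hfx : ∀ r : H.Path (f u) (f w), x ∈ (e.symm r).1.support →
          (f x) ∈ r.1.support := by
        intro r hx
        have : (e (e.symm r)).1 = (e.symm r).1.map f := he _
        rw [Equiv.apply_symm_apply] at this
        rw [this, Walk.support_map]
        exact List.mem_map_of_mem hx
      have hne2 : p' ≠ q' := fun h => hpq (by rw [h])
      rcases hdisj p' hp' q' hq' hne2 (f x) (hfx _ hxp) (hfx _ hxq) with h | h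
      · exact Or.inl (hinj h)
      · exact Or.inr (hinj h)
    · rintro ⟨Ps, hdisj, rfl⟩
      refine ⟨Ps.map e.toEmbedding, ?_, by simp⟩
      intro p hp q hq hpq x hxp hxq
      simp only [Finset.mem_map, Equiv.coe_toEmbedding] at hp hq
      obtain ⟨p', hp', rfl⟩ := hp
      obtain ⟨q', hq', rfl⟩ := hq
      rw [he, Walk.support_map] at hxp hxq
      obtain ⟨x1, hx1, hx1e⟩ := List.mem_map.1 hxp
      obtain ⟨x2, hx2, hx2e⟩ := List.mem_map.1 hxq
      have hx12 : x2 = x1 := hinj (by rw [hx1e, hx2e])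
      rw [hx12] at hx2
      have hne2 : p' ≠ q' := fun h => hpq (by rw [h])
      rcases hdisj p' hp' q' hq' hne2 x1 hx1 hx2 with h | h
      · exact Or.inl (by rw [← hx1e, h])
      · exact Or.inr (by rw [← hx1e, h])

end GenericAux

section MainAux
variable {k : ℕ} {V : Fin k → Type*} {Gs : ∀ i, SimpleGraph (V i)} {v : ∀ i, V i}
  {T : SimpleGraph (Fin k)}

/-- The amalgam of the `Gs i` along the tree `T`. -/
def bigGraph (Gs : ∀ i, SimpleGraph (V i)) (v : ∀ i, V i) (T : SimpleGraph (Fin k)) :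
    SimpleGraph ((i : Fin k) × V i) :=
  (⨆ i, (Gs i).map (⟨Sigma.mk i, sigma_mk_injective⟩ : V i ↪ Σ j, V j))
    ⊔ T.map (⟨fun i => ⟨i, v i⟩, fun i j h => congrArg Sigma.fst h⟩ : Fin k ↪ Σ j, V j)

local notation "BG" => bigGraph Gs v T

lemma bigGraph_adj {a b : (i : Fin k) × V i} :
    (BG).Adj a b ↔ ((∃ (i : Fin k) (x y : V i), (Gs i).Adj x y ∧ a = ⟨i, x⟩ ∧ b = ⟨i, y⟩)
      ∨ (T.Adj a.1 b.1 ∧ a = ⟨a.1, v a.1⟩ ∧ b = ⟨b.1, v b.1⟩)) := by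
  simp only [bigGraph, sup_adj, iSup_adj, SimpleGraph.map_adj, Function.Embedding.coeFn_mk]
  constructor
  · rintro (⟨i, -, x, y, hxy, ha, hb⟩ | ⟨i, j, hij, ha, hb⟩)
    · exact Or.inl ⟨i, x, y, hxy, ha.symm, hb.symm⟩
    · subst ha; subst hb
      exact Or.inr ⟨hij, rfl, rfl⟩
  · rintro (⟨i, x, y, hxy, rfl, rfl⟩ | ⟨hij, ha, hb⟩)
    · exact Or.inl ⟨i, fun h => hxy.ne (sigma_mk_injective h), x, y, hxy, rfl, rfl⟩
    · exact Or.inr ⟨a.1, b.1, hij, ha.symm, hb.symm⟩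

lemma cross_eq {a b : (i : Fin k) × V i} (h : (BG).Adj a b) (hab : a.1 ≠ b.1) :
    T.Adj a.1 b.1 ∧ a = ⟨a.1, v a.1⟩ ∧ b = ⟨b.1, v b.1⟩ := by
  rcases bigGraph_adj.1 h with ⟨i, x, y, hxy, rfl, rfl⟩ | h'
  · exact absurd rfl hab
  · exact h'

lemma adj_of_same {i : Fin k} {x y : V i} (h : (BG).Adj ⟨i, x⟩ ⟨i, y⟩) : (Gs i).Adj x y := by
  rcases bigGraph_adj.1 h with ⟨j, x', y', hxy, ha, hb⟩ | ⟨hT, -, -⟩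
  · obtain ⟨rfl, hx⟩ := Sigma.mk.inj_iff.mp ha
    obtain ⟨-, hy⟩ := Sigma.mk.inj_iff.mp hb
    rwa [eq_of_heq hx, eq_of_heq hy]
  · exact absurd hT (T.irrefl)

/-- Inclusion of `Gs i` into the amalgam. -/
def homι (Gs : ∀ i, SimpleGraph (V i)) (v : ∀ i, V i) (T : SimpleGraph (Fin k)) (i : Fin k) :
    Gs i →g bigGraph Gs v T :=
  ⟨Sigma.mk i, fun h => bigGraph_adj.2 (Or.inl ⟨i, _, _, h, rfl, rfl⟩)⟩

/-- Inclusion of `T` into the amalgam. -/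
def homτ (Gs : ∀ i, SimpleGraph (V i)) (v : ∀ i, V i) (T : SimpleGraph (Fin k)) :
    T →g bigGraph Gs v T :=
  ⟨fun i => ⟨i, v i⟩, fun h => bigGraph_adj.2 (Or.inr (by exact ⟨h, rfl, rfl⟩))⟩

lemma anchor {x y : (i : Fin k) × V i} (p : (BG).Walk x y) {m : Fin k}
    (hm : m ≠ x.1) (hex : ∃ z ∈ p.support, z.1 = m) :
    (⟨m, v m⟩ : (i : Fin k) × V i) ∈ p.support := by
  induction p with
  | nil =>
    obtain ⟨z, hz, hzm⟩ := hex
    rw [Walk.mem_support_nil_iff] at hz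
    exact absurd (hz ▸ hzm).symm hm
  | @cons a c y' h q ih =>
    obtain ⟨z, hz, hzm⟩ := hex
    rw [Walk.support_cons, List.mem_cons] at hz
    rcases hz with rfl | hz
    · exact absurd hzm.symm hm
    · rw [Walk.support_cons]
      by_cases hcm : c.1 = m
      · have hac : a.1 ≠ c.1 := fun hh => hm (hcm ▸ hh ▸ rfl)
        obtain ⟨-, -, hc⟩ := cross_eq h hac
        have : (⟨m, v m⟩ : (i : Fin k) × V i) = c := by rw [hc]; subst hcm; rfl
        rw [this]
        exact List.mem_cons_of_mem _ q.start_mem_support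
      · have := ih (fun hh => hcm hh.symm) ⟨z, hz, hzm⟩
        exact List.mem_cons_of_mem _ this

lemma proj {x y : (i : Fin k) × V i} (p : (BG).Walk x y) :
    ∃ q : T.Walk x.1 y.1, ∀ m ∈ q.support, ∃ z ∈ p.support, z.1 = m := by
  induction p with
  | nil => exact ⟨Walk.nil, fun m hm =>
      ⟨_, Walk.start_mem_support _, by rw [Walk.mem_support_nil_iff] at hm; rw [hm]⟩⟩
  | @cons a c y' h q ih =>
    obtain ⟨q', hq'⟩ := ih
    by_cases hac : a.1 = c.1
    · refine ⟨q'.copy hac.symm rfl, fun m hm => ?_⟩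
      rw [Walk.support_copy] at hm
      obtain ⟨z, hz, hzm⟩ := hq' m hm
      exact ⟨z, by rw [Walk.support_cons]; exact List.mem_cons_of_mem _ hz, hzm⟩
    · obtain ⟨hT, -, -⟩ := cross_eq h hac
      refine ⟨Walk.cons hT q', fun m hm => ?_⟩
      rw [Walk.support_cons, List.mem_cons] at hm
      rcases hm with rfl | hm
      · exact ⟨a, by simp, rfl⟩
      · obtain ⟨z, hz, hzm⟩ := hq' m hm
        exact ⟨z, by rw [Walk.support_cons]; exact List.mem_cons_of_mem _ hz, hzm⟩

lemma support_part {x y : (i : Fin k) × V i} (p : (BG).Walk x y) (hp : p.IsPath)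
    (hxy : x.1 = y.1) : ∀ z ∈ p.support, z.1 = x.1 := by
  induction p with
  | nil => intro z hz; rw [Walk.mem_support_nil_iff] at hz; rw [hz]
  | @cons a c y' h q ih =>
    intro z hz
    by_cases hac : a.1 = c.1
    · have hq := ih (Walk.IsPath.of_cons hp) (by rw [← hac, hxy])
      rw [Walk.support_cons, List.mem_cons] at hz
      rcases hz with rfl | hz
      · rfl
      · rw [hq z hz, ← hac]
    · exfalso
      obtain ⟨-, ha, -⟩ := cross_eq h hac
      have hmem : (⟨a.1, v a.1⟩ : (i : Fin k) × V i) ∈ q.support := by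
        refine anchor q hac ⟨y', q.end_mem_support, hxy.symm⟩
      rw [Walk.cons_isPath_iff] at hp
      exact hp.2 (ha ▸ hmem)

lemma lift {i : Fin k} : ∀ {x y : (j : Fin k) × V j} (p : (BG).Walk x y)
    (_ : ∀ z ∈ p.support, z.1 = i) {a b : V i} (hx : x = ⟨i, a⟩) (hy : y = ⟨i, b⟩),
    ∃ q : (Gs i).Walk a b, q.map (homι Gs v T i) = p.copy hx hy := by
  intro x y p
  induction p with
  | nil =>
    intro hp a b hx hy
    subst hx
    obtain ⟨-, hab⟩ := Sigma.mk.inj_iff.mp hy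
    obtain rfl := (eq_of_heq hab)
    exact ⟨Walk.nil, rfl⟩
  | @cons x c y' h q ih =>
    intro hp a b hx hy
    subst hx
    obtain ⟨cm, c2⟩ := c
    have hcm : cm = i := hp ⟨cm, c2⟩
      (by rw [Walk.support_cons]; exact List.mem_cons_of_mem _ q.start_mem_support)
    subst hcm
    obtain ⟨q', hq'⟩ := ih
      (fun z hz => hp z (by rw [Walk.support_cons]; exact List.mem_cons_of_mem _ hz)) rfl hy
    refine ⟨Walk.cons (adj_of_same h) q', ?_⟩
    rw [Walk.map_cons, hq', Walk.copy_cons]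
    rfl

lemma big_reachable (hconn : ∀ i, (Gs i).Connected) (hTc : T.Connected)
    (a b : (i : Fin k) × V i) : (BG).Reachable a b := by
  obtain ⟨i, x⟩ := a; obtain ⟨j, y⟩ := b
  have r1 : (BG).Reachable ⟨i, x⟩ ⟨i, v i⟩ :=
    Reachable.map (homι Gs v T i) ((hconn i).preconnected x (v i))
  have r2 : (BG).Reachable ⟨i, v i⟩ ⟨j, v j⟩ :=
    Reachable.map (homτ Gs v T) (hTc.preconnected i j)
  have r3 : (BG).Reachable ⟨j, v j⟩ ⟨j, y⟩ :=
    Reachable.map (homι Gs v T j) ((hconn j).preconnected (v j) y)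
  exact (r1.trans r2).trans r3

lemma localConn_part {i : Fin k} (u w : V i) :
    localConn (BG) ⟨i, u⟩ ⟨i, w⟩ = localConn (Gs i) u w := by
  have hinj : Function.Injective (homι Gs v T i) := sigma_mk_injective
  have hsurj : Function.Surjective
      (fun p : (Gs i).Path u w => SimpleGraph.Path.map (homι Gs v T i) hinj p) := by
    intro P
    have hp : ∀ z ∈ P.1.support, z.1 = i := support_part P.1 P.2 rfl
    obtain ⟨q, hq⟩ := lift P.1 hp rfl rfl
    replace hq : q.map (homι Gs v T i) = P.1 := hq
    have hqp : q.IsPath := by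
      have h2 : (q.map (homι Gs v T i)).IsPath := by rw [hq]; exact P.2
      exact h2.of_map
    exact ⟨⟨q, hqp⟩, Subtype.ext hq⟩
  exact localConn_map (homι Gs v T i) hinj u w hsurj

lemma localConn_cross (hconn : ∀ i, (Gs i).Connected) (hT : T.IsTree)
    {i j : Fin k} (hij : i ≠ j) (u : V i) (w : V j) :
    localConn (BG) ⟨i, u⟩ ⟨j, w⟩ = 1 := by
  have hne : (⟨i, u⟩ : (m : Fin k) × V m) ≠ ⟨j, w⟩ := fun h => hij (congrArg Sigma.fst h)
  refine localConn_eq_one hne (big_reachable hconn hT.isConnected _ _) ?_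
  have key : (∃ x : (m : Fin k) × V m,
      (∀ P : (BG).Path ⟨i, u⟩ ⟨j, w⟩, x ∈ P.1.support) ∧ x ≠ ⟨i, u⟩ ∧ x ≠ ⟨j, w⟩)
      ∨ (∀ P Q : (BG).Path ⟨i, u⟩ ⟨j, w⟩, P = Q) := by
    by_cases hu : u = v i
    case neg =>
      refine Or.inl ⟨⟨i, v i⟩, fun P => ?_, fun h => hu (sigma_mk_injective h).symm,
        fun h => hij (congrArg Sigma.fst h)⟩
      have := anchor P.1.reverse (m := i) hij
        ⟨⟨i, u⟩, by rw [Walk.support_reverse]; exact List.mem_reverse.2 P.1.start_mem_support, rfl⟩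
      rw [Walk.support_reverse] at this
      exact List.mem_reverse.1 this
    case pos =>
    subst hu
    by_cases hw : w = v j
    case neg =>
      refine Or.inl ⟨⟨j, v j⟩, fun P => ?_, fun h => hij (congrArg Sigma.fst h).symm,
        fun h => hw (sigma_mk_injective h).symm⟩
      exact anchor P.1 (m := j) (fun hh => hij hh.symm)
        ⟨⟨j, w⟩, P.1.end_mem_support, rfl⟩
    case pos =>
    subst hw
    obtain ⟨pt, hpt, hptu⟩ := hT.existsUnique_path i j
    by_cases hmid : ∃ m ∈ pt.support, m ≠ i ∧ m ≠ j
    · obtain ⟨m, hm, hmi, hmj⟩ := hmid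
      refine Or.inl ⟨⟨m, v m⟩, fun P => ?_, fun h => hmi (congrArg Sigma.fst h),
        fun h => hmj (congrArg Sigma.fst h)⟩
      obtain ⟨q, hq⟩ := proj P.1
      have hbp : q.bypass = pt := hptu q.bypass q.bypass_isPath
      have hmq : m ∈ q.support := q.support_bypass_subset (by rw [hbp]; exact hm)
      obtain ⟨z, hz, hzm⟩ := hq m hmq
      exact anchor P.1 hmi ⟨z, hz, hzm⟩
    · refine Or.inr ?_
      push_neg at hmid
      obtain ⟨c, hadj, pt', hpteq⟩ := Walk.exists_eq_cons_of_ne hij pt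
      have hpt' := hpt
      rw [hpteq, Walk.cons_isPath_iff] at hpt'
      have hc : c = j := by
        rcases eq_or_ne c i with rfl | hci
        · exact absurd pt'.start_mem_support hpt'.2
        · refine hmid c ?_ hci
          rw [hpteq, Walk.support_cons]
          exact List.mem_cons_of_mem _ pt'.start_mem_support
      rw [hc] at hadj
      have hTij : T.Adj i j := hadj
      have hbridge : (BG).Adj ⟨i, v i⟩ ⟨j, v j⟩ :=
        bigGraph_adj.2 (Or.inr (by exact ⟨hTij, rfl, rfl⟩))
      have huniq : ∀ P : (BG).Path ⟨i, v i⟩ ⟨j, v j⟩,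
          P.1 = Walk.cons hbridge Walk.nil := by
        intro P
        obtain ⟨c, h, rest, hPeq⟩ := Walk.exists_eq_cons_of_ne hne P.1
        have hrest : rest.IsPath ∧ (⟨i, v i⟩ : (m : Fin k) × V m) ∉ rest.support := by
          have h2 := P.2; rw [hPeq, Walk.cons_isPath_iff] at h2; exact h2
        rcases eq_or_ne c ⟨j, v j⟩ with rfl | hcb
        · have hnil : rest = Walk.nil := Walk.isPath_iff_eq_nil.1 hrest.1
          rw [hPeq, hnil]
        · exfalso
          by_cases hci : c.1 = i
          · have hmem : (⟨i, v i⟩ : (m : Fin k) × V m) ∈ rest.reverse.support :=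
              anchor rest.reverse (m := i) hij
                ⟨c, by rw [Walk.support_reverse]; exact List.mem_reverse.2 rest.start_mem_support, hci⟩
            rw [Walk.support_reverse] at hmem
            exact hrest.2 (List.mem_reverse.1 hmem)
          · obtain ⟨hTic, -, hcv⟩ := cross_eq h (fun hh => hci hh.symm)
            have hcj : c.1 ≠ j := by
              intro hh
              apply hcb
              rw [hcv]
              subst hh
              rfl
            have hW0 : (Walk.cons hTic.symm (Walk.cons hTij Walk.nil) : T.Walk c.1 j).IsPath := by
              rw [Walk.isPath_def]
              simp only [Walk.support_cons, Walk.support_nil]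
              refine List.nodup_cons.2 ⟨?_, List.nodup_cons.2 ⟨?_, List.nodup_singleton _⟩⟩
              · simp only [List.mem_cons, List.mem_singleton, List.not_mem_nil]
                push_neg
                exact ⟨fun hh => hci hh, fun hh => hcj hh, trivial⟩
              · simp only [List.mem_singleton]
                exact hij
            obtain ⟨q, hq⟩ := proj rest
            obtain ⟨pt2, hpt2, hptu2⟩ := hT.existsUnique_path c.1 j
            have h1 : q.bypass = pt2 := hptu2 _ q.bypass_isPath
            have h2 : (Walk.cons hTic.symm (Walk.cons hTij Walk.nil) : T.Walk c.1 j) = pt2 :=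
              hptu2 _ hW0
            have hiq : i ∈ q.support := by
              refine q.support_bypass_subset ?_
              rw [h1, ← h2]
              simp [Walk.support_cons]
            obtain ⟨z, hz, hzi⟩ := hq i hiq
            have hmem : (⟨i, v i⟩ : (m : Fin k) × V m) ∈ rest.support :=
              anchor rest (m := i) (fun hh => hci hh.symm) ⟨z, hz, hzi⟩
            exact hrest.2 hmem
      intro P Q
      exact Subtype.ext ((huniq P).trans (huniq Q).symm)
  intro p q hpq
  rcases key with ⟨x, hx, hxa, hxb⟩ | hall
  · exact ⟨x, hx p, hx q, hxa, hxb⟩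
  · exact absurd (hall p q) hpq

variable [∀ i, Fintype (V i)]

lemma ncard_sigma (W : Set ((i : Fin k) × V i)) :
    W.ncard = ∑ i, (Sigma.mk i ⁻¹' W).ncard := by
  classical
  have e : W ≃ ((i : Fin k) × ↥(Sigma.mk i ⁻¹' W)) :=
    { toFun := fun x => ⟨x.1.1, ⟨x.1.2, x.2⟩⟩
      invFun := fun y => ⟨⟨y.1, y.2.1⟩, y.2.2⟩
      left_inv := fun x => rfl
      right_inv := fun y => rfl }
  rw [← Nat.card_coe_set_eq, Nat.card_congr e, Nat.card_eq_fintype_card,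
    Fintype.card_sigma]
  exact Finset.sum_congr rfl fun i _ => by
    rw [← Nat.card_eq_fintype_card, Nat.card_coe_set_eq]

lemma resolving_iff (hconn : ∀ i, (Gs i).Connected) (hT : T.IsTree)
    (W : Set ((i : Fin k) × V i)) :
    ConnResolving (BG) W ↔
      ((∀ i, ConnResolving (Gs i) (Sigma.mk i ⁻¹' W)) ∧
       (∀ i j, i ≠ j → AllOne (Gs i) (Sigma.mk i ⁻¹' W) →
          AllOne (Gs j) (Sigma.mk j ⁻¹' W) → False)) := by
  constructor
  · intro hW
    refine ⟨?_, ?_⟩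
    · intro i a b hab
      have heq : (⟨i, a⟩ : (m : Fin k) × V m) = ⟨i, b⟩ := by
        refine hW _ _ ?_
        rintro ⟨m, y⟩ hz
        rcases eq_or_ne m i with rfl | hmi
        · rw [localConn_part, localConn_part]
          exact hab y hz
        · rw [localConn_cross hconn hT (fun hh => hmi hh.symm),
            localConn_cross hconn hT (fun hh => hmi hh.symm)]
      exact sigma_mk_injective heq
    · rintro i j hij ⟨a, ha⟩ ⟨b, hb⟩
      have heq : (⟨i, a⟩ : (m : Fin k) × V m) = ⟨j, b⟩ := by
        refine hW _ _ ?_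
        rintro ⟨m, y⟩ hz
        by_cases hmi : m = i
        · subst hmi
          rw [localConn_part, localConn_cross hconn hT (fun hh => hij hh.symm)]
          exact ha y hz
        · by_cases hmj : m = j
          · subst hmj
            rw [localConn_part, localConn_cross hconn hT hij]
            exact (hb y hz).symm
          · rw [localConn_cross hconn hT (fun hh => hmi hh.symm),
              localConn_cross hconn hT (fun hh => hmj hh.symm)]
      exact hij (congrArg Sigma.fst heq)
  · rintro ⟨hres, hpair⟩ a b hab
    obtain ⟨i, a2⟩ := a; obtain ⟨j, b2⟩ := b
    rcases eq_or_ne i j with rfl | hij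
    · have : a2 = b2 := by
        refine hres i a2 b2 fun y hy => ?_
        have := hab ⟨i, y⟩ hy
        rwa [localConn_part, localConn_part] at this
      rw [this]
    · exfalso
      refine hpair i j hij ⟨a2, fun y hy => ?_⟩ ⟨b2, fun y hy => ?_⟩
      · have := hab ⟨i, y⟩ hy
        rwa [localConn_part, localConn_cross hconn hT (fun hh => hij hh.symm)] at this
      · have := hab ⟨j, y⟩ hy
        rw [localConn_part, localConn_cross hconn hT hij] at this
        exact this.symm

end MainAux

/-- joining connected graphs `G₁,…,G_k` (each of order at least two) by a
tree `T` on chosen vertices `v₁,…,v_k` gives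
`cdim G = max (ℓ-1) 0 + Σ cdim Gᵢ`, where `ℓ` counts the `Gᵢ` forcing a `𝟙`
representation. -/
theorem stmt13 {k : ℕ} (V : Fin k → Type*) [∀ i, Fintype (V i)]
    (Gs : ∀ i, SimpleGraph (V i)) (hconn : ∀ i, (Gs i).Connected)
    (hcard : ∀ i, 2 ≤ Fintype.card (V i))
    (v : ∀ i, V i) (T : SimpleGraph (Fin k)) (hT : T.IsTree)
    (ℓ : ℕ) (hℓ : ℓ = Nat.card {i : Fin k // ForcesOne (Gs i)}) :
    cdim ((⨆ i, (Gs i).map (⟨Sigma.mk i, sigma_mk_injective⟩ : V i ↪ Σ j, V j))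
        ⊔ T.map (⟨fun i => ⟨i, v i⟩, fun i j h => congrArg Sigma.fst h⟩ : Fin k ↪ Σ j, V j))
      = max (ℓ - 1) 0 + ∑ i, cdim (Gs i) := by
  classical
  show cdim (bigGraph Gs v T) = max (ℓ - 1) 0 + ∑ i, cdim (Gs i)
  rw [Nat.max_zero]
  set F : Finset (Fin k) := Finset.univ.filter (fun i => ForcesOne (Gs i)) with hF
  have hℓF : ℓ = F.card := by
    rw [hℓ, Nat.card_eq_fintype_card, Fintype.card_subtype]
  -- Lower bound: every resolving set has at least the target cardinality.
  have lower : ∀ W : Set ((i : Fin k) × V i), ConnResolving (bigGraph Gs v T) W →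
      (ℓ - 1) + ∑ i, cdim (Gs i) ≤ W.ncard := by
    intro W hW
    obtain ⟨hres, hpair⟩ := (resolving_iff hconn hT W).1 hW
    set A : Finset (Fin k) :=
      F.filter (fun i => (Sigma.mk i ⁻¹' W).ncard = cdim (Gs i)) with hA
    have hAsub : A ⊆ F := Finset.filter_subset _ _
    have hAone : ∀ i ∈ A, AllOne (Gs i) (Sigma.mk i ⁻¹' W) := by
      intro i hi
      rw [hA, Finset.mem_filter] at hi
      have hFo : ForcesOne (Gs i) := by
        have := hi.1
        rw [hF, Finset.mem_filter] at this
        exact this.2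
      obtain ⟨u, hu⟩ := hFo _ (hres i) hi.2
      exact ⟨u, hu⟩
    have hA1 : A.card ≤ 1 := by
      rw [Finset.card_le_one]
      intro i hi j hj
      by_contra hij
      exact hpair i j hij (hAone i hi) (hAone j hj)
    have hge : ∀ i, cdim (Gs i) ≤ (Sigma.mk i ⁻¹' W).ncard := fun i =>
      cdim_le_ncard (hres i)
    have hstep : ∀ i, cdim (Gs i) + (if i ∈ F \ A then 1 else 0)
        ≤ (Sigma.mk i ⁻¹' W).ncard := by
      intro i
      by_cases hi : i ∈ F \ A
      · rw [if_pos hi]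
        have hne : (Sigma.mk i ⁻¹' W).ncard ≠ cdim (Gs i) := by
          intro he
          rw [Finset.mem_sdiff] at hi
          exact hi.2 (by rw [hA, Finset.mem_filter]; exact ⟨hi.1, he⟩)
        have := hge i
        omega
      · rw [if_neg hi]
        simpa using hge i
    have hsum : (∑ i, cdim (Gs i)) + (F \ A).card ≤ W.ncard := by
      rw [ncard_sigma W]
      have h1 : (F \ A).card = ∑ i, (if i ∈ F \ A then 1 else 0) := by
        rw [Finset.sum_ite_mem, Finset.univ_inter, Finset.card_eq_sum_ones]
      calc (∑ i, cdim (Gs i)) + (F \ A).card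
          = ∑ i, (cdim (Gs i) + if i ∈ F \ A then 1 else 0) := by
            rw [Finset.sum_add_distrib, h1]
        _ ≤ ∑ i, (Sigma.mk i ⁻¹' W).ncard := Finset.sum_le_sum fun i _ => hstep i
    have hFA : (F \ A).card = F.card - A.card := Finset.card_sdiff_of_subset hAsub
    have hAF : A.card ≤ F.card := Finset.card_le_card hAsub
    omega
  -- Upper bound: construct a resolving set of the target cardinality.
  have upper : cdim (bigGraph Gs v T) ≤ (ℓ - 1) + ∑ i, cdim (Gs i) := by
    rcases F.eq_empty_or_nonempty with hFe | hFne
    · have hsel : ∀ i : Fin k, ∃ Bi : Set (V i), ConnResolving (Gs i) Bi ∧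
          Bi.ncard = cdim (Gs i) ∧ ¬ AllOne (Gs i) Bi := by
        intro i
        have hnF : ¬ ForcesOne (Gs i) := by
          intro hFo
          have : i ∈ F := by rw [hF, Finset.mem_filter]; exact ⟨Finset.mem_univ i, hFo⟩
          rw [hFe] at this
          exact absurd this (Finset.notMem_empty i)
        exact of_not_forcesOne (Gs i) hnF
      choose B hB1 hB2 hB3 using hsel
      have hres : ConnResolving (bigGraph Gs v T) {x : (i : Fin k) × V i | x.2 ∈ B x.1} := by
        refine (resolving_iff hconn hT _).2 ⟨fun i => hB1 i, fun i j hij hi hj => hB3 i hi⟩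
      have hcard2 := cdim_le_ncard hres
      rw [ncard_sigma] at hcard2
      calc cdim (bigGraph Gs v T) ≤ ∑ i, (Sigma.mk i ⁻¹' {x : (i : Fin k) × V i | x.2 ∈ B x.1}).ncard := hcard2
        _ = ∑ i, cdim (Gs i) := Finset.sum_congr rfl fun i _ => hB2 i
        _ ≤ (ℓ - 1) + ∑ i, cdim (Gs i) := Nat.le_add_left _ _
    · obtain ⟨i₀, hi₀⟩ := hFne
      have hsel : ∀ i : Fin k, ∃ Bi : Set (V i), ConnResolving (Gs i) Bi ∧
          Bi.ncard = cdim (Gs i) + (if i ∈ F ∧ i ≠ i₀ then 1 else 0) ∧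
          (i ≠ i₀ → ¬ AllOne (Gs i) Bi) := by
        intro i
        by_cases hiF : i ∈ F
        · by_cases hii : i = i₀
          · subst hii
            obtain ⟨Bi, h1, h2⟩ := cdim_spec (Gs i)
            exact ⟨Bi, h1, by simp [h2], fun h => absurd rfl h⟩
          · have hFo : ForcesOne (Gs i) := by
              rw [hF, Finset.mem_filter] at hiF
              exact hiF.2
            obtain ⟨Bi, h1, h2, h3⟩ := exists_resolving_no_allone (Gs i) hFo
            exact ⟨Bi, h1, by rw [if_pos ⟨hiF, hii⟩, h2], fun _ => h3⟩
        · have hnF : ¬ ForcesOne (Gs i) := by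
            intro hFo
            exact hiF (by rw [hF, Finset.mem_filter]; exact ⟨Finset.mem_univ i, hFo⟩)
          obtain ⟨Bi, h1, h2, h3⟩ := of_not_forcesOne (Gs i) hnF
          refine ⟨Bi, h1, ?_, fun _ => h3⟩
          rw [if_neg (fun hh => hiF hh.1), h2, Nat.add_zero]
      choose B hB1 hB2 hB3 using hsel
      have hres : ConnResolving (bigGraph Gs v T) {x : (i : Fin k) × V i | x.2 ∈ B x.1} := by
        refine (resolving_iff hconn hT _).2 ⟨fun i => hB1 i, fun i j hij hi hj => ?_⟩
        rcases eq_or_ne i i₀ with rfl | hii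
        · exact hB3 j (fun hh => hij hh.symm) hj
        · exact hB3 i hii hi
      have hcard2 := cdim_le_ncard hres
      rw [ncard_sigma] at hcard2
      have hsum : ∑ i, (Sigma.mk i ⁻¹' {x : (i : Fin k) × V i | x.2 ∈ B x.1}).ncard
          = (∑ i, cdim (Gs i)) + (ℓ - 1) := by
        have e1 : ∑ i, (Sigma.mk i ⁻¹' {x : (i : Fin k) × V i | x.2 ∈ B x.1}).ncard
            = ∑ i, (cdim (Gs i) + if i ∈ F ∧ i ≠ i₀ then 1 else 0) :=
          Finset.sum_congr rfl fun i _ => hB2 i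
        rw [e1, Finset.sum_add_distrib]
        congr 1
        have hfe : Finset.univ.filter (fun i => i ∈ F ∧ i ≠ i₀) = F.erase i₀ := by
          ext x
          simp only [Finset.mem_filter, Finset.mem_univ, true_and, Finset.mem_erase]
          exact and_comm
        calc ∑ i, (if i ∈ F ∧ i ≠ i₀ then 1 else 0)
            = ∑ i ∈ Finset.univ.filter (fun i => i ∈ F ∧ i ≠ i₀), 1 :=
              (Finset.sum_filter _ _).symm
          _ = (F.erase i₀).card := by rw [hfe, Finset.card_eq_sum_ones]
          _ = F.card - 1 := Finset.card_erase_of_mem hi₀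
          _ = ℓ - 1 := by rw [hℓF]
      rw [hsum] at hcard2
      omega
  have hle : cdim (bigGraph Gs v T) ≥ (ℓ - 1) + ∑ i, cdim (Gs i) := by
    obtain ⟨W0, hW0, hc⟩ := cdim_spec (bigGraph Gs v T)
    rw [← hc]
    exact lower W0 hW0
  omega

end ConnDim
end

section
/- Every threshold graph G is maximally locally connected: for every pair of distinct vertices v, w of G, κ(v,w) = min{deg(v), deg(w)}. -/
open SimpleGraph

namespace ConnDim

section Aux

variable {V : Type*} {G : SimpleGraph V}

/-- The second vertex of a path's walk is a neighbor of `a`. -/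
lemma secondVert_adj {a b : V} (hab : a ≠ b) (p : G.Path a b) :
    G.Adj a (p.1.getVert 1) := by
  have hlen : 0 < p.1.length := Nat.pos_of_ne_zero
    (fun h => absurd ((Walk.nil_iff_length_eq.2 h).eq) hab)
  simpa using p.1.adj_getVert_succ hlen

lemma secondVert_mem_support {a b : V} (hab : a ≠ b) (p : G.Path a b) :
    p.1.getVert 1 ∈ p.1.support := by
  have hlen : 0 < p.1.length := Nat.pos_of_ne_zero
    (fun h => absurd ((Walk.nil_iff_length_eq.2 h).eq) hab)
  exact Walk.mem_support_iff_exists_getVert.2 ⟨1, rfl, hlen⟩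

/-- If a path from `a` to `b` has second vertex `b`, it is the single-edge walk. -/
lemma eq_single_of_secondVert_eq {a b : V} (hab : a ≠ b) (p : G.Path a b)
    (h : p.1.getVert 1 = b) :
    ∃ h' : G.Adj a b, p.1 = Walk.cons h' Walk.nil := by
  obtain ⟨x, hx, q, hq⟩ := Walk.exists_eq_cons_of_ne hab p.1
  have hx1 : p.1.getVert 1 = x := by rw [hq]; simp [Walk.getVert_cons_succ, Walk.getVert_zero]
  have hxb : x = b := hx1.symm.trans h
  subst hxb
  have hpq := p.2
  rw [hq, Walk.cons_isPath_iff] at hpq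
  have hqnil : q = Walk.nil := Walk.isPath_iff_eq_nil.1 hpq.1
  exact ⟨hx, by rw [hq, hqnil]⟩

/-- Upper bound: a family of internally disjoint paths has size at most `deg a`. -/
lemma card_le_deg [Fintype V] {a b : V} (hab : a ≠ b) (Ps : Finset (G.Path a b))
    (hdisj : ∀ p ∈ Ps, ∀ q ∈ Ps, p ≠ q → ∀ x : V,
        x ∈ p.1.support → x ∈ q.1.support → x = a ∨ x = b) :
    Ps.card ≤ (G.neighborSet a).ncard := by
  classical
  rw [Set.ncard_eq_toFinset_card', ← neighborFinset_def]
  apply Finset.card_le_card_of_injOn (fun p => p.1.getVert 1)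
  · intro p _
    rw [Finset.mem_coe, mem_neighborFinset]
    exact secondVert_adj hab p
  · intro p hp q hq hfq
    simp only at hfq
    by_contra hne
    have hmem := hdisj p hp q hq hne (p.1.getVert 1) (secondVert_mem_support hab p)
      (hfq ▸ secondVert_mem_support hab q)
    rcases hmem with h | h
    · exact (G.irrefl (h ▸ secondVert_adj hab p))
    · obtain ⟨h1, e1⟩ := eq_single_of_secondVert_eq hab p h
      obtain ⟨h2, e2⟩ := eq_single_of_secondVert_eq hab q (hfq ▸ h)
      exact hne (Subtype.ext (e1.trans e2.symm))

lemma path_reverse_injective {a b : V} :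
    Function.Injective (Path.reverse : G.Path a b → G.Path b a) := by
  intro p q h
  have : (p.1).reverse = (q.1).reverse := congrArg Subtype.val h
  exact Subtype.ext (by
    have := congrArg Walk.reverse this
    rwa [Walk.reverse_reverse, Walk.reverse_reverse] at this)

lemma conn_set_subset (a b : V) :
    {n : ℕ∞ | ∃ Ps : Finset (G.Path a b),
      (∀ p ∈ Ps, ∀ q ∈ Ps, p ≠ q → ∀ x : V,
        x ∈ p.1.support → x ∈ q.1.support → x = a ∨ x = b) ∧ (Ps.card : ℕ∞) = n} ⊆
    {n : ℕ∞ | ∃ Ps : Finset (G.Path b a),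
      (∀ p ∈ Ps, ∀ q ∈ Ps, p ≠ q → ∀ x : V,
        x ∈ p.1.support → x ∈ q.1.support → x = b ∨ x = a) ∧ (Ps.card : ℕ∞) = n} := by
  classical
  rintro n ⟨Ps, hdisj, hcard⟩
  refine ⟨Ps.image Path.reverse, ?_, ?_⟩
  · intro p hp q hq hne x hxp hxq
    obtain ⟨p', hp', rfl⟩ := Finset.mem_image.1 hp
    obtain ⟨q', hq', rfl⟩ := Finset.mem_image.1 hq
    have hne' : p' ≠ q' := fun h => hne (by rw [h])
    have hxp' : x ∈ p'.1.support := by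
      have : x ∈ (p'.1.reverse).support := hxp
      rwa [Walk.support_reverse, List.mem_reverse] at this
    have hxq' : x ∈ q'.1.support := by
      have : x ∈ (q'.1.reverse).support := hxq
      rwa [Walk.support_reverse, List.mem_reverse] at this
    exact (hdisj p' hp' q' hq' hne' x hxp' hxq').symm
  · rw [Finset.card_image_of_injective _ path_reverse_injective]
    exact hcard

lemma localConn_comm (G : SimpleGraph V) (a b : V) :
    localConn G a b = localConn G b a := by
  classical
  unfold localConn
  rcases eq_or_ne a b with rfl | hab
  · rfl
  · rw [if_neg hab, if_neg hab.symm]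
    congr 1
    exact le_antisymm (conn_set_subset a b) (conn_set_subset b a)

lemma localConn_eq_deg [Fintype V] {a b : V} (hab : a ≠ b)
    (hsub : ∀ x, x ≠ b → G.Adj a x → G.Adj b x) :
    localConn G a b = ((G.neighborSet a).ncard : ℕ∞) := by
  classical
  set S : Finset V := (G.neighborFinset a).erase b with hS
  have hSmem : ∀ x ∈ S, G.Adj a x ∧ G.Adj x b := by
    intro x hx
    have hxb : x ≠ b := (Finset.mem_erase.1 hx).1
    have hax : G.Adj a x := (mem_neighborFinset _ _ _).1 (Finset.mem_erase.1 hx).2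
    exact ⟨hax, (hsub x hxb hax).symm⟩
  -- two-edge path through x
  set f : {x // x ∈ S} → G.Path a b := fun x =>
    ⟨Walk.cons (hSmem x.1 x.2).1 (Walk.cons (hSmem x.1 x.2).2 Walk.nil), by
      simp [Walk.cons_isPath_iff, (hSmem x.1 x.2).1.ne, (hSmem x.1 x.2).2.ne, hab]⟩ with hf
  have hfsupp : ∀ x, (f x).1.support = [a, x.1, b] := fun x => by simp [hf]
  have hfinj : Function.Injective f := by
    intro x y h
    have := congrArg (fun p => p.1.support) h
    rw [hfsupp, hfsupp] at this
    exact Subtype.ext (by simpa using this)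
  set Ps0 : Finset (G.Path a b) := Finset.image f S.attach with hPs0
  have hcard0 : Ps0.card = S.card := by
    rw [hPs0, Finset.card_image_of_injective _ hfinj, Finset.card_attach]
  have hdeg : (G.neighborSet a).ncard = (G.neighborFinset a).card := by
    rw [Set.ncard_eq_toFinset_card', ← neighborFinset_def]
  -- disjointness for the two-edge paths
  have hdisj0 : ∀ p ∈ Ps0, ∀ q ∈ Ps0, p ≠ q → ∀ x : V,
      x ∈ p.1.support → x ∈ q.1.support → x = a ∨ x = b := by
    intro p hp q hq hne x hxp hxq
    obtain ⟨xp, _, rfl⟩ := Finset.mem_image.1 hp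
    obtain ⟨xq, _, rfl⟩ := Finset.mem_image.1 hq
    rw [hfsupp] at hxp hxq
    simp only [List.mem_cons, List.mem_singleton, List.not_mem_nil, or_false] at hxp hxq
    rcases hxp with rfl | rfl | rfl
    · exact Or.inl rfl
    · rcases hxq with h | h | h
      · exact Or.inl h
      · exact absurd (congrArg f (Subtype.ext h)) hne
      · exact Or.inr h
    · exact Or.inr rfl
  -- the target value is in the defining set
  have hmem : ((G.neighborSet a).ncard : ℕ∞) ∈ {n : ℕ∞ | ∃ Ps : Finset (G.Path a b),
      (∀ p ∈ Ps, ∀ q ∈ Ps, p ≠ q → ∀ x : V,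
        x ∈ p.1.support → x ∈ q.1.support → x = a ∨ x = b) ∧ (Ps.card : ℕ∞) = n} := by
    by_cases hadj : G.Adj a b
    · refine ⟨insert (Path.singleton hadj) Ps0, ?_, ?_⟩
      · intro p hp q hq hne x hxp hxq
        rcases Finset.mem_insert.1 hp with rfl | hp'
        · simpa [Path.singleton] using hxp
        rcases Finset.mem_insert.1 hq with rfl | hq'
        · simpa [Path.singleton] using hxq
        exact hdisj0 p hp' q hq' hne x hxp hxq
      · have hnot : Path.singleton hadj ∉ Ps0 := by
          intro hmem
          obtain ⟨x, _, hx⟩ := Finset.mem_image.1 hmem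
          have := congrArg (fun p => p.1.support.length) hx
          rw [hfsupp] at this
          simp [Path.singleton] at this
        rw [Finset.card_insert_of_notMem hnot, hcard0, hdeg]
        have hb : b ∈ G.neighborFinset a := (mem_neighborFinset _ _ _).2 hadj
        rw [hS]
        exact_mod_cast Finset.card_erase_add_one hb
    · refine ⟨Ps0, hdisj0, ?_⟩
      rw [hcard0, hdeg, hS]
      have : b ∉ G.neighborFinset a := fun h => hadj ((mem_neighborFinset _ _ _).1 h)
      rw [Finset.erase_eq_of_notMem this]
  -- conclude
  rw [localConn, if_neg hab]
  refine le_antisymm (sSup_le ?_) (le_sSup hmem)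
  rintro n ⟨Ps, hdisj, rfl⟩
  exact_mod_cast card_le_deg hab Ps hdisj

lemma deg_le_deg [Fintype V] {a b : V} (hab : a ≠ b)
    (hsub : ∀ x, x ≠ b → G.Adj a x → G.Adj b x) :
    (G.neighborSet a).ncard ≤ (G.neighborSet b).ncard := by
  classical
  rw [Set.ncard_eq_toFinset_card', ← neighborFinset_def,
    Set.ncard_eq_toFinset_card', ← neighborFinset_def]
  apply Finset.card_le_card_of_injOn (fun x => if x = b then a else x)
  · intro x hx
    rw [Finset.mem_coe, mem_neighborFinset] at hx ⊢
    beta_reduce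
    split_ifs with h
    · subst h
      exact hx.symm
    · exact hsub x h hx
  · intro x hx y hy hxy
    simp only at hxy
    rw [Finset.mem_coe, mem_neighborFinset] at hx hy
    split_ifs at hxy with h1 h2 h2
    · exact h1.trans h2.symm
    · subst hxy
      exact absurd hy G.irrefl
    · exact absurd hx (hxy ▸ G.irrefl)
    · exact hxy

end Aux


lemma threshold_adj {L : List Bool} {i j : Fin L.length} :
    (thresholdGraph L).Adj i j ↔
      i ≠ j ∧ ((i < j ∧ L.get j = true) ∨ (j < i ∧ L.get i = true)) := by
  simp only [thresholdGraph, fromRel_adj]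

lemma main' {L : List Bool} {v w : Fin L.length} (hvw : v < w) :
    localConn (thresholdGraph L) v w =
      ((min ((thresholdGraph L).neighborSet v).ncard
            ((thresholdGraph L).neighborSet w).ncard : ℕ) : ℕ∞) := by
  by_cases hw : L.get w = true
  · have hsub : ∀ x, x ≠ w → (thresholdGraph L).Adj v x → (thresholdGraph L).Adj w x := by
      intro x hxw hvx
      rw [threshold_adj] at hvx ⊢
      refine ⟨fun h => hxw h.symm, ?_⟩
      rcases lt_trichotomy x w with h | h | h
      · exact Or.inr ⟨h, hw⟩
      · exact absurd h hxw
      · refine Or.inl ⟨h, ?_⟩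
        rcases hvx.2 with ⟨h1, h2⟩ | ⟨h1, h2⟩
        · exact h2
        · exact absurd (h1.trans (hvw.trans h)) (lt_irrefl x)
    rw [localConn_eq_deg hvw.ne hsub, min_eq_left (deg_le_deg hvw.ne hsub)]
  · have hsub : ∀ x, x ≠ v → (thresholdGraph L).Adj w x → (thresholdGraph L).Adj v x := by
      intro x hxv hwx
      rw [threshold_adj] at hwx ⊢
      obtain ⟨hne, hc⟩ := hwx
      rcases hc with ⟨h1, h2⟩ | ⟨h1, h2⟩
      · exact ⟨fun h => hxv h.symm, Or.inl ⟨hvw.trans h1, h2⟩⟩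
      · exact absurd h2 hw
    rw [localConn_comm, localConn_eq_deg hvw.ne' hsub,
      min_eq_right (deg_le_deg hvw.ne' hsub)]


/-- every threshold graph is maximally locally connected:
`κ(v,w) = min (deg v) (deg w)` for all pairs of distinct vertices. -/
theorem stmt18 (L : List Bool) (v w : Fin L.length) (hvw : v ≠ w) :
    localConn (thresholdGraph L) v w =
      ((min ((thresholdGraph L).neighborSet v).ncard
            ((thresholdGraph L).neighborSet w).ncard : ℕ) : ℕ∞) := by
  rcases hvw.lt_or_gt with h | h
  · exact main' h
  · rw [localConn_comm, min_comm]
    exact main' h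

end ConnDim
end
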